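/- Consider the class of real-valued random variables Y having a differentiable, absolutely continuous probability density p_Y with finite Fisher information J(Y) < ∞ and finite second moment E[Y²] < ∞. The following two statements are equivalent: (1) every Y in this class satisfies the one-dimensional Gaussian logarithmic Sobolev inequality D(P_Y ‖ G) ≤ (1/2) I(P_Y ‖ G); (2) every Y in this class satisfies Stam's inequality N(Y) J(Y) ≥ 1. -/

import Mathlib

open MeasureTheory ProbabilityTheory
open scoped ENNReal NNReal Classical

/-- The relative entropy (Kullback–Leibler divergence) `D(Q‖P)`, equal to
`∫ ln(dQ/dP) dQ` when `Q ≪ P` (and the log-likelihood ratio is integrable), and `+∞`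
otherwise. -/
noncomputable def relEnt {α : Type*} [MeasurableSpace α] (Q P : Measure α) : ℝ≥0∞ :=
  if Q ≪ P ∧ Integrable (fun x => Real.log (Q.rnDeriv P x).toReal) Q
  then ENNReal.ofReal (∫ x, Real.log (Q.rnDeriv P x).toReal ∂Q) else ⊤

/-- The standard Gaussian density `γ(y) = (2π)^{-1/2} exp(-y²/2)` on `ℝ`. -/
noncomputable def gaussPdf (y : ℝ) : ℝ :=
  (Real.sqrt (2 * Real.pi))⁻¹ * Real.exp (-(y^2)/2)

/-- The Borel measure on `ℝ` with density `p` with respect to Lebesgue measure. -/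
noncomputable def densMeasure (p : ℝ → ℝ) : Measure ℝ :=
  (volume : Measure ℝ).withDensity fun y => ENNReal.ofReal (p y)

/-- The Fisher information `J(Y) = ∫ (p'(y)/p(y))² p(y) dy` of a random variable with
density `p`. -/
noncomputable def fisherInfoFn (p : ℝ → ℝ) : ℝ := ∫ y, (deriv p y / p y)^2 * p y

/-- The differential entropy `h(Y) = -∫ p ln p`. -/
noncomputable def diffEntropy (p : ℝ → ℝ) : ℝ := -∫ y, p y * Real.log (p y)

/-- The entropy power `N(Y) = exp(2h(Y))/(2πe)`. -/
noncomputable def entropyPower (p : ℝ → ℝ) : ℝ :=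
  Real.exp (2 * diffEntropy p) / (2 * Real.pi * Real.exp 1)

/-- The relative Fisher information `I(P_Y ‖ G) = ∫ |d/dy ln(p(y)/γ(y))|² p(y) dy` between the
law of `Y` (with density `p`) and the standard Gaussian measure. -/
noncomputable def relFisherGauss (p : ℝ → ℝ) : ℝ :=
  ∫ y, (deriv (fun z => Real.log (p z / gaussPdf z)) y)^2 * p y

/-- The class of densities considered: differentiable (hence absolutely continuous)
probability densities with finite Fisher information and finite second moment. -/
def NiceDensity (p : ℝ → ℝ) : Prop :=
  Differentiable ℝ p ∧ (∀ y, 0 ≤ p y) ∧ IsProbabilityMeasure (densMeasure p) ∧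
    Integrable (fun y => (deriv p y / p y)^2 * p y) ∧ Integrable (fun y => y^2 * p y)

namespace CarlenAux

open Real Filter
open scoped Topology

lemma gaussPdf_pos (y : ℝ) : 0 < gaussPdf y := by
  unfold gaussPdf; positivity

lemma continuous_gaussPdf : Continuous gaussPdf := by
  unfold gaussPdf; fun_prop

lemma log_gaussPdf (y : ℝ) :
    Real.log (gaussPdf y) = -(y^2)/2 - Real.log (Real.sqrt (2*Real.pi)) := by
  unfold gaussPdf
  rw [Real.log_mul (by positivity) (Real.exp_ne_zero _), Real.log_inv, Real.log_exp]
  ring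

lemma integrable_gaussPdf : Integrable gaussPdf := by
  have h : Integrable (fun y : ℝ => (Real.sqrt (2 * Real.pi))⁻¹ * Real.exp (-(1/2 : ℝ) * y^2)) :=
    (integrable_exp_neg_mul_sq (by norm_num : (0:ℝ) < 1/2)).const_mul _
  refine h.congr (ae_of_all _ fun y => ?_)
  unfold gaussPdf
  ring_nf

lemma hasDerivAt_gaussPdf (y : ℝ) : HasDerivAt gaussPdf (-y * gaussPdf y) y := by
  have h1 : HasDerivAt (fun z : ℝ => -(z^2)/2) (-y) y := by
    have := (hasDerivAt_pow 2 y).neg.div_const 2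
    simpa using this.congr_deriv (by push_cast; ring)
  have h2 := (h1.exp).const_mul (Real.sqrt (2 * Real.pi))⁻¹
  unfold gaussPdf
  exact h2.congr_deriv (by ring)

variable {p : ℝ → ℝ}

lemma deriv_zero_of_zero (hd : Differentiable ℝ p) (h0 : ∀ y, 0 ≤ p y) {y : ℝ}
    (hy : p y = 0) : deriv p y = 0 := by
  have : IsLocalMin p y := Filter.Eventually.of_forall (fun z => by rw [hy]; exact h0 z)
  exact this.deriv_eq_zero

lemma abs_deriv_le (hd : Differentiable ℝ p) (h0 : ∀ y, 0 ≤ p y) (y : ℝ) :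
    |deriv p y| ≤ ((deriv p y / p y)^2 * p y + p y)/2 := by
  rcases eq_or_lt_of_le (h0 y) with h|h
  · rw [deriv_zero_of_zero hd h0 h.symm]; simp [← h]
  · set a := deriv p y with ha
    set b := p y with hbdef
    set c := a / b with hc
    have hb : b ≠ 0 := ne_of_gt h
    have hab : |a| = |c| * b := by
      rw [← abs_of_pos h, ← abs_mul, hc]; congr 1; field_simp
    rw [hab]
    nlinarith [mul_nonneg (sq_nonneg (|c| - 1)) h.le, sq_abs c, h.le]

lemma abs_mul_deriv_le (hd : Differentiable ℝ p) (h0 : ∀ y, 0 ≤ p y) (y : ℝ) :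
    |y * deriv p y| ≤ ((deriv p y / p y)^2 * p y + y^2 * p y)/2 := by
  rcases eq_or_lt_of_le (h0 y) with h|h
  · rw [deriv_zero_of_zero hd h0 h.symm]; simp [← h]
  · set a := deriv p y with ha
    set b := p y with hbdef
    set c := a / b with hc
    have hb : b ≠ 0 := ne_of_gt h
    have hab1 : |a| = |c| * b := by
      rw [← abs_of_pos h, ← abs_mul, hc]; congr 1; field_simp
    have hab : |y * a| = |y| * |c| * b := by rw [abs_mul, hab1, mul_assoc]
    rw [hab]
    nlinarith [mul_nonneg (sq_nonneg (|c| - |y|)) h.le, sq_abs c, sq_abs y, h.le]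

lemma integrable_p (hp : NiceDensity p) : Integrable p := by
  obtain ⟨hd, h0, hprob, hF, hm⟩ := hp
  have hm' : Measurable p := hd.continuous.measurable
  have h1 : densMeasure p Set.univ = 1 := measure_univ
  rw [densMeasure, withDensity_apply _ MeasurableSet.univ, setLIntegral_univ] at h1
  refine ⟨hm'.aestronglyMeasurable, ?_⟩
  rw [hasFiniteIntegral_iff_ofReal (ae_of_all _ h0), h1]
  exact ENNReal.one_lt_top

lemma integral_p (hp : NiceDensity p) : ∫ y, p y = 1 := by
  have hi := integrable_p hp
  obtain ⟨hd, h0, hprob, hF, hm⟩ := hp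
  have h1 : densMeasure p Set.univ = 1 := measure_univ
  rw [densMeasure, withDensity_apply _ MeasurableSet.univ, setLIntegral_univ] at h1
  rw [integral_eq_lintegral_of_nonneg_ae (ae_of_all _ h0) hi.aestronglyMeasurable, h1]
  simp

lemma integrable_deriv (hp : NiceDensity p) : Integrable (deriv p) := by
  have hip := integrable_p hp
  obtain ⟨hd, h0, hprob, hF, hm⟩ := hp
  refine Integrable.mono' ((hF.add hip).div_const 2) (measurable_deriv p).aestronglyMeasurable ?_
  exact ae_of_all _ (fun y => abs_deriv_le hd h0 y)

lemma integrable_mul_deriv (hp : NiceDensity p) : Integrable (fun y => y * deriv p y) := by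
  have hip := integrable_p hp
  obtain ⟨hd, h0, hprob, hF, hm⟩ := hp
  refine Integrable.mono' ((hF.add hm).div_const 2)
    ((measurable_id.mul (measurable_deriv p)).aestronglyMeasurable) ?_
  exact ae_of_all _ (fun y => abs_mul_deriv_le hd h0 y)

lemma integrable_mul_p (hp : NiceDensity p) : Integrable (fun y => y * p y) := by
  have hip := integrable_p hp
  obtain ⟨hd, h0, hprob, hF, hm⟩ := hp
  refine Integrable.mono' ((hip.add hm).div_const 2)
    ((measurable_id.mul hd.continuous.measurable).aestronglyMeasurable) ?_
  refine ae_of_all _ (fun y => ?_)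
  have key : |y * p y| ≤ (p y + y^2 * p y)/2 := by
    rcases eq_or_lt_of_le (h0 y) with h|h
    · simp [← h]
    · rw [abs_mul, abs_of_pos h]
      nlinarith [mul_nonneg (sq_nonneg (|y| - 1)) h.le, sq_abs y, abs_nonneg y]
  simpa [abs_mul] using key

lemma integral_mul_deriv (hp : NiceDensity p) : ∫ y, y * deriv p y = -1 := by
  have hip := integrable_p hp
  have hIp := integral_p hp
  have hyp := integrable_mul_p hp
  have hyp' := integrable_mul_deriv hp
  obtain ⟨hd, h0, hprob, hF, hm⟩ := hp
  have hderiv : ∀ x : ℝ, HasDerivAt (fun y => y * p y) (p x + x * deriv p x) x := by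
    intro x
    have h1 : HasDerivAt (fun y : ℝ => y) 1 x := hasDerivAt_id x
    have h2 : HasDerivAt p (deriv p x) x := (hd x).hasDerivAt
    exact (h1.mul h2).congr_deriv (by ring)
  have h4 : ∫ x, (p x + x * deriv p x) = 0 :=
    integral_eq_zero_of_hasDerivAt_of_integrable hderiv (hip.add hyp') hyp
  rw [integral_add hip hyp', hIp] at h4
  linarith

lemma tendsto_p_atTop (hp : NiceDensity p) : Tendsto p atTop (𝓝 0) := by
  have hip := integrable_p hp
  have hip' := integrable_deriv hp
  obtain ⟨hd, h0, hprob, hF, hm⟩ := hp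
  have h1 : Tendsto p atTop (𝓝 (limUnder atTop p)) := by
    apply tendsto_limUnder_of_hasDerivAt_of_integrableOn_Ioi (a := 0)
      (fun x _ => (hd x).hasDerivAt) hip'.integrableOn
  have h2 : limUnder atTop p = 0 := by
    refine IntegrableAtFilter.eq_zero_of_tendsto (hip.integrableAtFilter _) ?_ h1
    intro s hs
    rcases mem_atTop_sets.1 hs with ⟨b, hb⟩
    rw [← top_le_iff, ← volume_Ici (a := b)]
    exact measure_mono hb
  rwa [h2] at h1

lemma p_le_bound (hp : NiceDensity p) (y : ℝ) :
    p y ≤ (fisherInfoFn p + 1)/2 := by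
  have hip := integrable_p hp
  have hip' := integrable_deriv hp
  have htt := tendsto_p_atTop hp
  have hIp := integral_p hp
  obtain ⟨hd, h0, hprob, hF, hm⟩ := hp
  have h1 : ∫ z in Set.Ioi y, deriv p z = 0 - p y :=
    integral_Ioi_of_hasDerivAt_of_tendsto' (fun x _ => (hd x).hasDerivAt)
      hip'.integrableOn htt
  have h2 : p y = ‖∫ z in Set.Ioi y, deriv p z‖ := by
    rw [h1]; simp [abs_of_nonneg (h0 y)]
  have h3 : p y ≤ ∫ z, |deriv p z| := by
    rw [h2]
    calc ‖∫ z in Set.Ioi y, deriv p z‖ ≤ ∫ z in Set.Ioi y, ‖deriv p z‖ :=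
          norm_integral_le_integral_norm _
      _ ≤ ∫ z, |deriv p z| :=
          setIntegral_le_integral hip'.abs (ae_of_all _ (fun z => abs_nonneg _))
  have h4 : ∫ z, |deriv p z| ≤ ∫ z, ((deriv p z / p z)^2 * p z + p z)/2 :=
    integral_mono hip'.abs ((hF.add hip).div_const 2) (fun z => abs_deriv_le hd h0 z)
  have h5 : ∫ z, ((deriv p z / p z)^2 * p z + p z)/2 = (fisherInfoFn p + 1)/2 := by
    rw [integral_div, integral_add hF hip, hIp, fisherInfoFn]
  linarith

lemma integrable_mul_log (hp : NiceDensity p) :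
    Integrable (fun y => p y * Real.log (p y)) := by
  have hip := integrable_p hp
  have hpb := p_le_bound hp
  obtain ⟨hd, h0, hprob, hF, hm⟩ := hp
  set B : ℝ := max ((fisherInfoFn p + 1)/2) 1 with hB
  have hB1 : 1 ≤ B := le_max_right _ _
  have hlogB : 0 ≤ Real.log B := Real.log_nonneg hB1
  set g : ℝ → ℝ := fun y =>
    p y * Real.log B + ((y^2 * p y)/2 + Real.log (Real.sqrt (2*Real.pi)) * p y) + gaussPdf y
    with hg
  have hgint : Integrable g := by
    exact (((hip.mul_const _).add ((hm.div_const 2).add (hip.const_mul _)))).add integrable_gaussPdf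
  refine Integrable.mono' hgint ((Real.continuous_mul_log.comp hd.continuous).aestronglyMeasurable) ?_
  refine ae_of_all _ (fun y => ?_)
  have hlogs : 0 ≤ Real.log (Real.sqrt (2*Real.pi)) := by
    rw [Real.log_sqrt (by positivity)]
    have h1 : (1:ℝ) ≤ 2 * Real.pi := by nlinarith [Real.pi_gt_three]
    have h2 : 0 ≤ Real.log (2*Real.pi) := Real.log_nonneg h1
    linarith
  rcases eq_or_lt_of_le (h0 y) with h|h
  · have hz : p y * Real.log (p y) = 0 := by rw [← h]; ring
    rw [hz, norm_zero, hg]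
    simp only [← h, zero_mul, mul_zero, zero_div, add_zero, zero_add]
    exact (gaussPdf_pos y).le
  · rw [Real.norm_eq_abs, abs_le, hg]
    have hpB : p y ≤ B := (hpb y).trans (le_max_left _ _)
    have h1 : Real.log (p y) ≤ Real.log B := Real.log_le_log h hpB
    have h1' : p y * Real.log (p y) ≤ p y * Real.log B :=
      mul_le_mul_of_nonneg_left h1 (h0 y)
    have hl := Real.log_le_sub_one_of_pos (div_pos (gaussPdf_pos y) h)
    rw [Real.log_div (gaussPdf_pos y).ne' h.ne'] at hl
    have h2 : (Real.log (gaussPdf y) - Real.log (p y)) * p y ≤ gaussPdf y - p y := by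
      have := mul_le_mul_of_nonneg_right hl (h0 y)
      calc (Real.log (gaussPdf y) - Real.log (p y)) * p y
          ≤ (gaussPdf y / p y - 1) * p y := this
        _ = gaussPdf y - p y := by field_simp
    have h3 : p y * Real.log (gaussPdf y)
        = -(y^2)/2 * p y - Real.log (Real.sqrt (2*Real.pi)) * p y := by
      rw [log_gaussPdf]; ring
    constructor
    · nlinarith [mul_nonneg (h0 y) hlogB, h0 y, sq_nonneg y,
        mul_nonneg (sq_nonneg y) (h0 y), mul_nonneg (h0 y) hlogs]
    · nlinarith [mul_nonneg (h0 y) hlogB, h0 y, (gaussPdf_pos y).le, sq_nonneg y,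
        mul_nonneg (sq_nonneg y) (h0 y), mul_nonneg (h0 y) hlogs]


lemma gaussianPDFReal_eq (y : ℝ) : gaussianPDFReal 0 1 y = gaussPdf y := by
  simp [gaussianPDFReal, gaussPdf]

lemma measurable_ratio (hd : Differentiable ℝ p) :
    Measurable fun y => ENNReal.ofReal (p y / gaussPdf y) :=
  ((hd.continuous.div continuous_gaussPdf (fun y => (gaussPdf_pos y).ne')).measurable).ennreal_ofReal

lemma densMeasure_eq (hd : Differentiable ℝ p) :
    densMeasure p
      = (gaussianReal 0 1).withDensity (fun y => ENNReal.ofReal (p y / gaussPdf y)) := by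
  rw [gaussianReal_of_var_ne_zero 0 one_ne_zero,
    ← withDensity_mul _ (measurable_gaussianPDF 0 1) (measurable_ratio hd)]
  unfold densMeasure
  congr 1
  funext y
  rw [Pi.mul_apply, gaussianPDF, gaussianPDFReal_eq,
    ← ENNReal.ofReal_mul (gaussPdf_pos y).le, mul_comm,
    div_mul_cancel₀ _ (gaussPdf_pos y).ne']

lemma pt_log_ratio (h0 : ∀ y, 0 ≤ p y) (x : ℝ) :
    Real.log (p x / gaussPdf x) * p x
      = p x * Real.log (p x) + ((x^2 * p x)/2 + Real.log (Real.sqrt (2*Real.pi)) * p x) := by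
  rcases eq_or_lt_of_le (h0 x) with h|h
  · rw [← h]; ring
  · rw [Real.log_div h.ne' (gaussPdf_pos x).ne', log_gaussPdf]
    ring

lemma relEnt_eq (hp : NiceDensity p) :
    relEnt (densMeasure p) (gaussianReal 0 1)
      = ENNReal.ofReal (-diffEntropy p + (∫ y, y^2 * p y)/2
          + Real.log (Real.sqrt (2*Real.pi))) := by
  have hip := integrable_p hp
  have hIp := integral_p hp
  have hmlog := integrable_mul_log hp
  obtain ⟨hd, h0, hprob, hF, hm⟩ := hp
  have hmeas := measurable_ratio hd
  have hde := densMeasure_eq hd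
  have habs : densMeasure p ≪ gaussianReal 0 1 := by
    rw [hde]; exact withDensity_absolutelyContinuous _ _
  have hrn := Measure.rnDeriv_withDensity (gaussianReal 0 1) hmeas
  rw [← hde] at hrn
  have hrnQ := hrn.filter_mono habs.ae_le
  have hlog_eq : (fun x => Real.log ((densMeasure p).rnDeriv (gaussianReal 0 1) x).toReal)
      =ᵐ[densMeasure p] fun x => Real.log (p x / gaussPdf x) := by
    refine hrnQ.mono fun x hx => ?_
    dsimp only at hx ⊢
    rw [hx, ENNReal.toReal_ofReal (div_nonneg (h0 x) (gaussPdf_pos x).le)]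
  set φ : ℝ → ℝ := fun x =>
    p x * Real.log (p x) + ((x^2 * p x)/2 + Real.log (Real.sqrt (2*Real.pi)) * p x) with hφ
  have hg2 : Integrable (fun x : ℝ =>
      (x^2 * p x)/2 + Real.log (Real.sqrt (2*Real.pi)) * p x) := by
    exact (hm.div_const 2).add (hip.const_mul _)
  have hφint : Integrable φ := hmlog.add hg2
  have hIntQ : Integrable (fun x => Real.log (p x / gaussPdf x)) (densMeasure p) := by
    rw [densMeasure, integrable_withDensity_iff
      (hd.continuous.measurable.ennreal_ofReal) (ae_of_all _ fun x => ENNReal.ofReal_lt_top)]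
    refine hφint.congr (ae_of_all _ fun x => ?_)
    dsimp only
    rw [ENNReal.toReal_ofReal (h0 x)]
    exact (pt_log_ratio h0 x).symm
  have hIntlog : Integrable
      (fun x => Real.log ((densMeasure p).rnDeriv (gaussianReal 0 1) x).toReal)
      (densMeasure p) := hIntQ.congr hlog_eq.symm
  rw [relEnt, if_pos ⟨habs, hIntlog⟩]
  congr 1
  rw [integral_congr_ae hlog_eq]
  have hd1 : densMeasure p = volume.withDensity (fun y => ((p y).toNNReal : ℝ≥0∞)) := rfl
  rw [hd1, integral_withDensity_eq_integral_smul hd.continuous.measurable.real_toNNReal]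
  have : ∀ x : ℝ, (p x).toNNReal • Real.log (p x / gaussPdf x) = φ x := by
    intro x
    rw [NNReal.smul_def, Real.coe_toNNReal _ (h0 x), smul_eq_mul, mul_comm]
    exact pt_log_ratio h0 x
  rw [integral_congr_ae (ae_of_all _ this), hφ]
  rw [integral_add hmlog hg2, integral_add (hm.div_const 2) (hip.const_mul _),
    integral_div, MeasureTheory.integral_const_mul, hIp, diffEntropy]
  ring


lemma deriv_log_ratio (hd : Differentiable ℝ p) {y : ℝ} (h : 0 < p y) :
    deriv (fun z => Real.log (p z / gaussPdf z)) y = deriv p y / p y + y := by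
  have hγ := hasDerivAt_gaussPdf y
  have hp' : HasDerivAt p (deriv p y) y := (hd y).hasDerivAt
  have hu : HasDerivAt (fun z => p z / gaussPdf z)
      ((deriv p y * gaussPdf y - p y * (-y * gaussPdf y))/(gaussPdf y)^2) y :=
    hp'.div hγ (gaussPdf_pos y).ne'
  have hne : p y / gaussPdf y ≠ 0 := (div_pos h (gaussPdf_pos y)).ne'
  have hlog : HasDerivAt (fun z => Real.log (p z / gaussPdf z))
      ((p y / gaussPdf y)⁻¹ * ((deriv p y * gaussPdf y - p y * (-y * gaussPdf y))/(gaussPdf y)^2))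
      y := by have := (Real.hasDerivAt_log hne).comp y hu; exact this
  rw [hlog.deriv]
  have hγ0 : gaussPdf y ≠ 0 := (gaussPdf_pos y).ne'
  field_simp
  ring

lemma relFisher_integrand (hd : Differentiable ℝ p) (h0 : ∀ y, 0 ≤ p y) (y : ℝ) :
    (deriv (fun z => Real.log (p z / gaussPdf z)) y)^2 * p y
      = (deriv p y / p y)^2 * p y + 2*(y * deriv p y) + y^2 * p y := by
  rcases eq_or_lt_of_le (h0 y) with h|h
  · rw [← h, deriv_zero_of_zero hd h0 h.symm]; ring
  · rw [deriv_log_ratio hd h]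
    have hb : p y ≠ 0 := h.ne'
    field_simp
    ring

lemma relFisherGauss_nonneg (h0 : ∀ y, 0 ≤ p y) : 0 ≤ relFisherGauss p :=
  integral_nonneg fun y => mul_nonneg (sq_nonneg _) (h0 y)

lemma relFisher_eq (hp : NiceDensity p) :
    relFisherGauss p = fisherInfoFn p - 2 + ∫ y, y^2 * p y := by
  have hyd := integrable_mul_deriv hp
  have hydI := integral_mul_deriv hp
  obtain ⟨hd, h0, hprob, hF, hm⟩ := hp
  have h2 : Integrable (fun y => 2*(y * deriv p y)) := hyd.const_mul 2
  have hsum : Integrable (fun y => (deriv p y / p y)^2 * p y + 2*(y * deriv p y)) := hF.add h2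
  rw [relFisherGauss, integral_congr_ae (ae_of_all _ (relFisher_integrand hd h0)),
    integral_add hsum hm, integral_add hF h2, MeasureTheory.integral_const_mul, hydI,
    fisherInfoFn]
  ring

/-! ### Scaling -/

lemma isProb_densMeasure {f : ℝ → ℝ} (h0 : ∀ y, 0 ≤ f y) (hfi : Integrable f)
    (hI : ∫ y, f y = 1) : IsProbabilityMeasure (densMeasure f) := by
  constructor
  rw [densMeasure, withDensity_apply _ MeasurableSet.univ, setLIntegral_univ,
    ← ofReal_integral_eq_lintegral_ofReal hfi (ae_of_all _ h0), hI]
  simp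

variable {s : ℝ}

lemma scaled_deriv (hd : Differentiable ℝ p) (hs : s ≠ 0) (y : ℝ) :
    deriv (fun y => p (y/s)/s) y = deriv p (y/s) / s^2 := by
  have hc : HasDerivAt (fun y : ℝ => y/s) (1/s) y := (hasDerivAt_id y).div_const s
  have h2 : HasDerivAt p (deriv p (y/s)) (y/s) := (hd _).hasDerivAt
  have h3 : HasDerivAt (fun y => p (y/s)/s) ((deriv p (y/s) * (1/s))/s) y :=
    (h2.comp y hc).div_const s
  rw [h3.deriv]
  ring

lemma scaled_ratio (hd : Differentiable ℝ p) (hs : s ≠ 0) (y : ℝ) :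
    deriv (fun y => p (y/s)/s) y / (p (y/s)/s) = (deriv p (y/s) / p (y/s)) / s := by
  rw [scaled_deriv hd hs]
  rcases eq_or_ne (p (y/s)) 0 with h|h
  · simp [h]
  · field_simp

lemma scaled_fisher_integrand (hd : Differentiable ℝ p) (hs : s ≠ 0) (y : ℝ) :
    (deriv (fun y => p (y/s)/s) y / (p (y/s)/s))^2 * (p (y/s)/s)
      = ((deriv p (y/s) / p (y/s))^2 * p (y/s)) / s^3 := by
  rw [scaled_ratio hd hs]
  field_simp

lemma integral_comp_div' (g : ℝ → ℝ) (hs : 0 < s) : ∫ x, g (x/s) = s * ∫ y, g y := by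
  rw [Measure.integral_comp_div g s, abs_of_pos hs, smul_eq_mul]

lemma scaled_nice (hp : NiceDensity p) (hs : 0 < s) :
    NiceDensity (fun y => p (y/s)/s) := by
  have hip := integrable_p hp
  have hIp := integral_p hp
  obtain ⟨hd, h0, hprob, hF, hm⟩ := hp
  have hdq : Differentiable ℝ (fun y => p (y/s)/s) :=
    (hd.comp (differentiable_id.div_const s)).div_const s
  have h0q : ∀ y, 0 ≤ p (y/s)/s := fun y => div_nonneg (h0 _) hs.le
  have hiq : Integrable (fun y => p (y/s)/s) := (hip.comp_div hs.ne').div_const s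
  have hIq : ∫ y, p (y/s)/s = 1 := by
    have h1 : (∫ a : ℝ, p (a/s)) = s * ∫ y, p y := integral_comp_div' p hs
    rw [integral_div, h1, hIp]
    field_simp
  refine ⟨hdq, h0q, isProb_densMeasure h0q hiq hIq, ?_, ?_⟩
  · refine (((hF.comp_div hs.ne').div_const (s^3)).congr (ae_of_all _ fun y => ?_))
    exact (scaled_fisher_integrand hd hs.ne' y).symm
  · refine (((hm.comp_div hs.ne').const_mul s).congr (ae_of_all _ fun y => ?_))
    dsimp only
    field_simp

lemma scaled_fisher (hp : NiceDensity p) (hs : 0 < s) :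
    fisherInfoFn (fun y => p (y/s)/s) = fisherInfoFn p / s^2 := by
  obtain ⟨hd, h0, hprob, hF, hm⟩ := hp
  rw [fisherInfoFn, integral_congr_ae (ae_of_all _ (scaled_fisher_integrand hd hs.ne')),
    integral_div]
  have h1 : (∫ a : ℝ, (deriv p (a/s) / p (a/s))^2 * p (a/s)) = s * fisherInfoFn p :=
    integral_comp_div' (fun u => (deriv p u / p u)^2 * p u) hs
  rw [h1]
  field_simp

lemma scaled_moment (hp : NiceDensity p) (hs : 0 < s) :
    ∫ y, y^2 * (p (y/s)/s) = s^2 * ∫ y, y^2 * p y := by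
  have heq : ∀ y : ℝ, y^2 * (p (y/s)/s) = s * ((fun u => u^2 * p u) (y/s)) := by
    intro y
    dsimp only
    field_simp
  rw [integral_congr_ae (ae_of_all _ heq), MeasureTheory.integral_const_mul]
  have h1 : (∫ a : ℝ, (fun u => u^2 * p u) (a/s)) = s * ∫ y, y^2 * p y :=
    integral_comp_div' (fun u => u^2 * p u) hs
  rw [h1]
  ring

lemma scaled_entropy (hp : NiceDensity p) (hs : 0 < s) :
    diffEntropy (fun y => p (y/s)/s) = diffEntropy p + Real.log s := by
  have hip := integrable_p hp
  have hIp := integral_p hp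
  have hmlog := integrable_mul_log hp
  obtain ⟨hd, h0, hprob, hF, hm⟩ := hp
  have heq : ∀ y : ℝ, (p (y/s)/s) * Real.log (p (y/s)/s)
      = (fun u => (p u * Real.log (p u) - Real.log s * p u)/s) (y/s) := by
    intro y
    dsimp only
    rcases eq_or_lt_of_le (h0 (y/s)) with h|h
    · rw [← h]; simp
    · rw [Real.log_div h.ne' hs.ne']
      field_simp
  have hsub : Integrable (fun u => (p u * Real.log (p u) - Real.log s * p u)/s) :=
    (hmlog.sub (hip.const_mul _)).div_const s
  have h1 : (∫ a : ℝ, (fun u => (p u * Real.log (p u) - Real.log s * p u)/s) (a/s))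
      = s * ∫ u, (p u * Real.log (p u) - Real.log s * p u)/s :=
    integral_comp_div' (fun u => (p u * Real.log (p u) - Real.log s * p u)/s) hs
  rw [diffEntropy, integral_congr_ae (ae_of_all _ heq), h1, integral_div,
    integral_sub hmlog (hip.const_mul _), MeasureTheory.integral_const_mul, hIp, diffEntropy]
  field_simp
  ring

end CarlenAux

/-- **Carlen's equivalence.** The one-dimensional Gaussian logarithmic Sobolev inequality
`D(P_Y‖G) ≤ ½ I(P_Y‖G)` holds for every random variable `Y` in the class (of differentiable,
absolutely continuous densities with finite Fisher information and finite second moment)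
if and only if Stam's inequality `N(Y)·J(Y) ≥ 1` holds for every `Y` in this class. -/
theorem gaussian_LSI_iff_stam :
    (∀ p : ℝ → ℝ, NiceDensity p →
        relEnt (densMeasure p) (gaussianReal 0 1) ≤ ENNReal.ofReal ((1/2) * relFisherGauss p)) ↔
    (∀ p : ℝ → ℝ, NiceDensity p → 1 ≤ entropyPower p * fisherInfoFn p) := by
  have hπ : (0:ℝ) < 2*Real.pi*Real.exp 1 := by positivity
  have hlog2pi : Real.log (Real.sqrt (2*Real.pi)) = Real.log (2*Real.pi)/2 :=
    Real.log_sqrt (by positivity)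
  constructor
  · intro hLSI p hp
    have hJ0 : 0 ≤ fisherInfoFn p :=
      integral_nonneg (fun y => mul_nonneg (sq_nonneg _) (hp.2.1 y))
    set J := fisherInfoFn p with hJ
    set m := ∫ y, y^2 * p y with hm'
    set h := diffEntropy p with hh
    have key : ∀ s : ℝ, 0 < s →
        -h - Real.log s + Real.log (Real.sqrt (2*Real.pi)) + 1 ≤ J/(2*s^2) := by
      intro s hs
      have hq := CarlenAux.scaled_nice hp hs
      have h1 := hLSI _ hq
      have h2 : relFisherGauss (fun y => p (y/s)/s) = J/s^2 - 2 + s^2*m := by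
        rw [CarlenAux.relFisher_eq hq, CarlenAux.scaled_fisher hp hs,
          CarlenAux.scaled_moment hp hs]
      have h3 : 0 ≤ (1/2) * relFisherGauss (fun y => p (y/s)/s) := by
        have := CarlenAux.relFisherGauss_nonneg hq.2.1
        linarith
      rw [CarlenAux.relEnt_eq hq, ENNReal.ofReal_le_ofReal_iff h3,
        CarlenAux.scaled_entropy hp hs, CarlenAux.scaled_moment hp hs, h2] at h1
      have hs2 : (0:ℝ) < s^2 := by positivity
      have e1 : (1/2)*(J/s^2 - 2 + s^2*m) = J/(2*s^2) - 1 + s^2*m/2 := by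
        field_simp
      rw [e1] at h1
      linarith
    rcases eq_or_lt_of_le hJ0 with hJz|hJpos
    · exfalso
      have hk := key (Real.exp (Real.log (Real.sqrt (2*Real.pi)) - h)) (Real.exp_pos _)
      rw [Real.log_exp, ← hJz] at hk
      have : (0:ℝ)/(2*(Real.exp (Real.log (Real.sqrt (2*Real.pi)) - h))^2) = 0 := by
        simp
      rw [this] at hk
      linarith
    · have hkey := key (Real.sqrt J) (Real.sqrt_pos.mpr hJpos)
      rw [Real.sq_sqrt hJpos.le, Real.log_sqrt hJpos.le] at hkey
      have hJJ : J/(2*J) = 1/2 := by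
        rw [eq_div_iff (by norm_num : (2:ℝ) ≠ 0)]
        field_simp
      rw [hJJ] at hkey
      have h2h : Real.log (2*Real.pi) + 1 - Real.log J ≤ 2*h := by
        rw [hlog2pi] at hkey
        linarith
      rw [entropyPower, div_mul_eq_mul_div, le_div_iff₀ hπ, one_mul]
      calc 2*Real.pi*Real.exp 1 = Real.exp (Real.log (2*Real.pi) + 1 - Real.log J) * J := by
            rw [Real.exp_sub, Real.exp_add, Real.exp_log (by positivity), Real.exp_log hJpos]
            field_simp
        _ ≤ Real.exp (2*h) * J :=
            mul_le_mul_of_nonneg_right (Real.exp_le_exp.mpr h2h) hJpos.le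
  · intro hStam p hp
    have h1 := hStam p hp
    have hJ0 : 0 ≤ fisherInfoFn p :=
      integral_nonneg (fun y => mul_nonneg (sq_nonneg _) (hp.2.1 y))
    set J := fisherInfoFn p with hJ
    set m := ∫ y, y^2 * p y with hm'
    set h := diffEntropy p with hh
    have hJpos : 0 < J := by
      rcases eq_or_lt_of_le hJ0 with hz|hz
      · exfalso
        rw [← hz, mul_zero] at h1
        linarith
      · exact hz
    rw [CarlenAux.relEnt_eq hp, CarlenAux.relFisher_eq hp]
    apply ENNReal.ofReal_le_ofReal
    have h2 : 2*Real.pi*Real.exp 1 ≤ Real.exp (2*h)*J := by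
      rw [entropyPower, div_mul_eq_mul_div, le_div_iff₀ hπ, one_mul] at h1
      linarith
    have h3 : Real.log (2*Real.pi) + 1 ≤ 2*h + Real.log J := by
      have hl := Real.log_le_log hπ h2
      rw [Real.log_mul (by positivity) (Real.exp_ne_zero 1),
        Real.log_mul (Real.exp_ne_zero _) hJpos.ne', Real.log_exp, Real.log_exp] at hl
      linarith
    have h4 : Real.log J ≤ J - 1 := Real.log_le_sub_one_of_pos hJpos
    rw [hlog2pi]
    linarith
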